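/- Let R be a finite commutative local ring of odd characteristic, let z be a unit of R that is not a square of a unit, and let ν be a positive integer. Then the scalar matrix z·I_{2ν} is cogredient to the identity matrix I_{2ν} over R. -/

import Mathlib

/-- Two square matrices are cogredient if `P * S1 * P.transpose = S2` for some invertible `P`. -/
def Cogredient {R : Type*} [CommRing R] {n : Type*} [Fintype n] [DecidableEq n]
    (S1 S2 : Matrix n n R) : Prop :=
  ∃ P : Matrix n n R, IsUnit P.det ∧ P * S1 * P.transpose = S2

/-- Block diagonal sum `A ⊕ B` of square matrices. -/
def matOplus {R : Type*} [CommRing R] {a b : ℕ}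
    (A : Matrix (Fin a) (Fin a) R) (B : Matrix (Fin b) (Fin b) R) :
    Matrix (Fin (a + b)) (Fin (a + b)) R :=
  (Matrix.reindex finSumFinEquiv finSumFinEquiv) (Matrix.fromBlocks A 0 0 B)

/-- The hyperbolic matrix `H_{2ν} = [[0, I_ν], [I_ν, 0]]`. -/
def hypMat (R : Type*) [CommRing R] (ν : ℕ) : Matrix (Fin (ν + ν)) (Fin (ν + ν)) R :=
  (Matrix.reindex finSumFinEquiv finSumFinEquiv)
    (Matrix.fromBlocks (0 : Matrix (Fin ν) (Fin ν) R) 1 1 0)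



open IsLocalRing

section Aux

variable {R : Type*} [CommRing R] [IsLocalRing R]

lemma aux_two_unit (hchar : Odd (ringChar R)) : IsUnit (2 : R) := by
  obtain ⟨m, hm⟩ := hchar
  refine IsUnit.of_mul_eq_one ((m + 1 : ℕ) : R) ?_
  haveI := ringChar.charP R
  have h0 : ((ringChar R : ℕ) : R) = 0 := CharP.cast_eq_zero R (ringChar R)
  have : ((2 * m + 1 + 1 : ℕ) : R) = 1 := by
    rw [← hm]; push_cast [h0]; simp [h0]
  calc (2 : R) * ((m + 1 : ℕ) : R) = ((2 * m + 1 + 1 : ℕ) : R) := by push_cast; ring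
    _ = 1 := this

lemma aux_unit_add_mem {a b : R} (h : IsUnit a) (hb : b ∈ maximalIdeal R) :
    IsUnit (a + b) := by
  by_contra hn
  have : a + b ∈ maximalIdeal R := hn
  have : a ∈ maximalIdeal R := by
    have := (maximalIdeal R).sub_mem this hb
    simpa using this
  exact this h

lemma aux_pow_sub_one_mem {u : R} (hu : u - 1 ∈ maximalIdeal R) (k : ℕ) :
    u ^ k - 1 ∈ maximalIdeal R := by
  induction k with
  | zero => simp
  | succ n ih =>
    have : u ^ (n + 1) - 1 = u ^ n * (u - 1) + (u ^ n - 1) := by ring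
    rw [this]
    exact (maximalIdeal R).add_mem (Ideal.mul_mem_left _ _ hu) ih

lemma aux_exists_sq [Fintype R] (h2 : IsUnit (2 : R)) (u : Rˣ)
    (hu : (u : R) - 1 ∈ maximalIdeal R) : ∃ s : R, s * s = u := by
  have hfin : Finite Rˣ := inferInstance
  set d := orderOf u with hd
  have hdpos : 0 < d := orderOf_pos u
  have hodd : Odd d := by
    rcases Nat.even_or_odd d with he | ho
    · exfalso
      obtain ⟨e, he'⟩ := he
      have hepos : 0 < e := by omega
      set v := u ^ e with hv
      have hv2 : (v : R) * (v : R) = 1 := by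
        have : v * v = 1 := by rw [hv, ← pow_add, ← he', hd, pow_orderOf_eq_one]
        simpa using congrArg Units.val this
      have hvm : (v : R) - 1 ∈ maximalIdeal R := by
        have := aux_pow_sub_one_mem hu e
        simpa [hv] using this
      have hu1 : IsUnit ((v : R) + 1) := by
        have h : (v : R) + 1 = 2 + ((v : R) - 1) := by ring
        rw [h]; exact aux_unit_add_mem h2 hvm
      have hv1 : (v : R) = 1 := by
        have hz : ((v : R) + 1) * ((v : R) - 1) = ((v : R) + 1) * 0 := by
          rw [mul_zero]; linear_combination hv2
        exact sub_eq_zero.mp (hu1.mul_left_cancel hz)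
      have hve : u ^ e = 1 := Units.ext (by simpa [hv] using hv1)
      have hdvd : d ∣ e := orderOf_dvd_of_pow_eq_one hve
      have := Nat.le_of_dvd hepos hdvd
      omega
    · exact ho
  obtain ⟨c, hc⟩ := hodd
  refine ⟨(u : R) ^ (c + 1), ?_⟩
  have hpow : u ^ ((c + 1) + (c + 1)) = u := by
    have h1 : (c + 1) + (c + 1) = d + 1 := by omega
    rw [h1, pow_succ, pow_orderOf_eq_one, one_mul]
  calc (u : R) ^ (c + 1) * (u : R) ^ (c + 1)
      = ((u ^ ((c + 1) + (c + 1)) : Rˣ) : R) := by push_cast [pow_add]; ring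
    _ = u := by rw [hpow]

end Aux

lemma aux_field_sq_add_sq {K : Type*} [Field K] [Fintype K]
    (hK : Fintype.card K % 2 = 1) (c : K) : ∃ a b : K, a ^ 2 + b ^ 2 = c := by
  obtain ⟨a, b, hab⟩ := FiniteField.exists_root_sum_quadratic
    (f := (Polynomial.X ^ 2 : Polynomial K)) (g := Polynomial.X ^ 2 - Polynomial.C c)
    (Polynomial.degree_X_pow 2) (Polynomial.degree_X_pow_sub_C (by norm_num) _) hK
  refine ⟨a, b, ?_⟩
  simp only [Polynomial.eval_pow, Polynomial.eval_X, Polynomial.eval_sub,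
    Polynomial.eval_C] at hab
  linear_combination hab

lemma aux_field_rep {K : Type*} [Field K] [Fintype K] (hK : Fintype.card K % 2 = 1)
    {c : K} (hc : c ≠ 0) : ∃ x y : K, x ≠ 0 ∧ x ^ 2 + y ^ 2 = c := by
  by_cases hsq : IsSquare c
  · obtain ⟨t, ht⟩ := hsq
    refine ⟨t, 0, ?_, by rw [ht]; ring⟩
    rintro rfl
    exact hc (by simp [ht])
  · obtain ⟨x, y, hxy⟩ := aux_field_sq_add_sq hK c
    refine ⟨x, y, ?_, hxy⟩
    rintro rfl
    exact hsq ⟨y, by linear_combination -hxy⟩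


def auxJ (R : Type*) [CommRing R] (ν : ℕ) : Matrix (Fin (ν + ν)) (Fin (ν + ν)) R :=
  (Matrix.reindex finSumFinEquiv finSumFinEquiv)
    (Matrix.fromBlocks (0 : Matrix (Fin ν) (Fin ν) R) 1 (-1) 0)

lemma auxJ_transpose {R : Type*} [CommRing R] (ν : ℕ) :
    (auxJ R ν).transpose = -auxJ R ν := by
  rw [auxJ, Matrix.transpose_reindex, Matrix.fromBlocks_transpose]
  have h : (Matrix.fromBlocks (0 : Matrix (Fin ν) (Fin ν) R).transpose
      (-1 : Matrix (Fin ν) (Fin ν) R).transpose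
      (1 : Matrix (Fin ν) (Fin ν) R).transpose (0 : Matrix (Fin ν) (Fin ν) R).transpose)
      = -(Matrix.fromBlocks 0 1 (-1) 0) := by
    rw [Matrix.fromBlocks_neg]
    congr 1 <;> simp
  rw [h]
  simp [Matrix.reindex_apply, Matrix.submatrix_neg]

lemma auxJ_mul_self {R : Type*} [CommRing R] (ν : ℕ) :
    auxJ R ν * auxJ R ν = -1 := by
  rw [auxJ]
  simp only [Matrix.reindex_apply, Matrix.submatrix_mul_equiv,
    Matrix.fromBlocks_multiply]
  have h2 : (Matrix.fromBlocks (-1 : Matrix (Fin ν) (Fin ν) R) 0 0 (-1))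
      = -(1 : Matrix (Fin ν ⊕ Fin ν) (Fin ν ⊕ Fin ν) R) := by
    rw [← Matrix.fromBlocks_one (l := Fin ν) (m := Fin ν) (α := R), Matrix.fromBlocks_neg]
    congr 1 <;> simp
  simp only [mul_one, one_mul, zero_mul, mul_zero, zero_add, add_zero, mul_neg, neg_mul,
    neg_zero]
  rw [h2]
  have h4 := Matrix.submatrix_one_equiv (α := R) (finSumFinEquiv (m := ν) (n := ν)).symm
  ext i j
  simp [Matrix.submatrix, Matrix.neg_apply, Matrix.one_apply, Equiv.apply_eq_iff_eq_symm_apply]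


/-- z·I_{2ν} is cogredient to I_{2ν} for a non-square unit z. -/
theorem stmt_6 (R : Type*) [CommRing R] [IsLocalRing R] [Fintype R]
    (hchar : Odd (ringChar R)) (z : Rˣ) (hz : ∀ a : Rˣ, z ≠ a ^ 2)
    (ν : ℕ) (hν : 0 < ν) :
    Cogredient ((z : R) • (1 : Matrix (Fin (ν + ν)) (Fin (ν + ν)) R)) 1 := by
  classical
  have h2 : IsUnit (2 : R) := aux_two_unit hchar
  -- the residue field
  set K := ResidueField R with hK
  have hfinK : Finite K := Finite.of_surjective _ (residue_surjective (R := R))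
  letI : Fintype K := Fintype.ofFinite K
  have h2K : (2 : K) ≠ 0 := by
    have hr : residue R (2 : R) = (2 : K) := map_ofNat _ 2
    intro h0
    exact (residue_ne_zero_iff_isUnit (2 : R)).mpr h2 (hr.trans h0)
  have hcharK : ringChar K ≠ 2 := by
    intro h
    haveI := ringChar.charP K
    have hc : ((2 : ℕ) : K) = 0 := by rw [← h]; exact CharP.cast_eq_zero K _
    exact h2K (by exact_mod_cast hc)
  have hcard : Fintype.card K % 2 = 1 := by
    haveI := ringChar.charP K
    obtain ⟨n, hp, hcardK⟩ := FiniteField.card K (ringChar K)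
    have hodd : Odd (ringChar K) := hp.odd_of_ne_two hcharK
    rw [hcardK, ← Nat.odd_iff]
    exact hodd.pow
  -- find a, b with a² + b² = z⁻¹ in R
  set w : Rˣ := z⁻¹ with hw
  have hwK : residue R (w : R) ≠ 0 := (residue_ne_zero_iff_isUnit _).mpr w.isUnit
  obtain ⟨xb, yb, hx0, hrep⟩ := aux_field_rep hcard hwK
  obtain ⟨x, hx⟩ := residue_surjective (R := R) xb
  obtain ⟨y, hy⟩ := residue_surjective (R := R) yb
  have hxu : IsUnit x := by
    rw [← residue_ne_zero_iff_isUnit, hx]; exact hx0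
  have ht : (w : R) - x * x - y * y ∈ maximalIdeal R := by
    rw [← residue_eq_zero_iff]
    have : residue R ((w : R) - x * x - y * y)
        = residue R (w : R) - xb ^ 2 - yb ^ 2 := by
      rw [← hx, ← hy]; push_cast [map_sub, map_mul]; ring
    rw [this]
    rw [← hrep]; ring
  have hxx : IsUnit (x * x) := hxu.mul hxu
  have hwy : IsUnit ((w : R) - y * y) := by
    have h : (w : R) - y * y = x * x + ((w : R) - x * x - y * y) := by ring
    rw [h]; exact aux_unit_add_mem hxx ht
  set u : Rˣ := hwy.unit * hxx.unit⁻¹ with hu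
  have hxxinv : (x * x) * ((hxx.unit⁻¹ : Rˣ) : R) = 1 := by
    have := hxx.unit.mul_inv
    rwa [IsUnit.unit_spec] at this
  have huval : (u : R) = ((w : R) - y * y) * ((hxx.unit⁻¹ : Rˣ) : R) := by
    rw [hu, Units.val_mul, IsUnit.unit_spec]
  have hum : (u : R) - 1 ∈ maximalIdeal R := by
    have : (u : R) - 1 = ((w : R) - x * x - y * y) * ((hxx.unit⁻¹ : Rˣ) : R) := by
      rw [huval, ← hxxinv]; ring
    rw [this]
    exact Ideal.mul_mem_right _ _ ht
  obtain ⟨s, hs⟩ := aux_exists_sq h2 u hum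
  set a := x * s with ha
  have hab : a * a + y * y = (w : R) := by
    have h1 : (x * x) * (u : R) = (w : R) - y * y := by
      rw [huval, mul_comm ((w : R) - y * y) _, ← mul_assoc, hxxinv, one_mul]
    have h2' : a * a = (w : R) - y * y := by
      rw [ha]
      calc x * s * (x * s) = (x * x) * (s * s) := by ring
        _ = (x * x) * (u : R) := by rw [hs]
        _ = (w : R) - y * y := h1
    rw [h2']; ring
  -- build the matrix P = a•1 + y•J
  set J := auxJ R ν with hJ
  have hJT := auxJ_transpose (R := R) ν
  have hJJ := auxJ_mul_self (R := R) ν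
  rw [← hJ] at hJT hJJ
  set P : Matrix (Fin (ν + ν)) (Fin (ν + ν)) R := a • 1 + y • J with hP
  have hPT : P.transpose = a • 1 - y • J := by
    rw [hP, Matrix.transpose_add, Matrix.transpose_smul, Matrix.transpose_smul,
      Matrix.transpose_one, hJT, smul_neg, ← sub_eq_add_neg]
  have hPPT : P * P.transpose = (w : R) • 1 := by
    rw [hPT, hP]
    have : (a • (1 : Matrix (Fin (ν + ν)) (Fin (ν + ν)) R) + y • J) * (a • 1 - y • J)
        = (a * a) • 1 - (a * y) • J + ((y * a) • J - (y * y) • (J * J)) := by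
      rw [Matrix.add_mul, Matrix.mul_sub, Matrix.mul_sub]
      simp [smul_smul, Matrix.smul_mul, Matrix.mul_smul, mul_comm]
    rw [this, hJJ]
    rw [← hab]
    simp [smul_smul, mul_comm, add_smul]
    abel
  have key : P * ((z : R) • 1) * P.transpose = 1 := by
    have h1 : P * ((z : R) • 1) = (z : R) • P := by
      rw [Matrix.mul_smul, Matrix.mul_one]
    rw [h1, Matrix.smul_mul, hPPT, smul_smul]
    have : (z : R) * (w : R) = 1 := by
      rw [hw]; exact z.mul_inv
    rw [this, one_smul]
  refine ⟨P, ?_, key⟩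
  have : P * (((z : R) • 1) * P.transpose) = 1 := by rw [← Matrix.mul_assoc]; exact key
  exact Matrix.isUnit_det_of_right_inverse this
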